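/- (Existence and uniqueness of the Stackelberg equilibrium.) Suppose 0 < p_m ≤ p_c ≤ e·p_m ≤ p_s, and for each i ∈ I suppose b1^i = (e − 1)/(q·F^i·η^i) and p_c·(q·F^i·η^i/(e − 1)) ≤ k1^i ≤ p_m·(e·q·F^i·η^i/(e − 1)). Then there exists exactly one pair (p*, (β*^i)_{i∈I}) with p* ∈ [p_m, p_c] and β*^i ∈ [0,1] for all i, such that: (a) for each i ∈ I, β*^i maximizes β ↦ U^i(p*, β) over [0,1]; and (b) p* maximizes the anticipated profit L̃ over [p_m, p_c]. Moreover at this equilibrium β*^i = (1/(q·F^i·η^i))·(k1^i/p* − 1/b1^i). -/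

import Mathlib

open Real Set

/-- Utility of CCHP `i` at bid `p` and partition coefficient `β`. -/
noncomputable def cchpU (q F η k1 b1 c p β : ℝ) : ℝ :=
  k1 * Real.log (1 + b1 * q * F * η * β) + c + p * q * F * η * (1 - β)

/-- The APG's anticipated profit under CCHP best responses. -/
noncomputable def apgProfit {ι : Type*} [Fintype ι] (q : ℝ) (F η k1 b1 : ι → ℝ)
    (p_s p_c R : ℝ) (p : ℝ) : ℝ :=
  (p_c - p) * ∑ i, (q * F i * η i - (k1 i / p - 1 / b1 i)) + (p_s - p_c) * R

private lemma emone_pos : (0:ℝ) < Real.exp 1 - 1 := by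
  have h := Real.add_one_lt_exp (x := 1) one_ne_zero
  linarith

private lemma key_log (k1 μ t t' : ℝ) (hk : 0 < k1) (ht : 0 < t) (ht' : 0 < t')
    (hμ : μ * t' = k1) (hne : t ≠ t') :
    k1 * Real.log t - μ * t < k1 * Real.log t' - μ * t' := by
  have hx : 0 < t / t' := div_pos ht ht'
  have hx1 : t / t' ≠ 1 := by
    intro h
    rw [div_eq_one_iff_eq ht'.ne'] at h
    exact hne h
  have hlt : Real.log (t / t') < t / t' - 1 := Real.log_lt_sub_one_of_pos hx hx1
  rw [Real.log_div ht.ne' ht'.ne'] at hlt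
  have h1 : k1 * (Real.log t - Real.log t') < k1 * (t / t' - 1) :=
    (mul_lt_mul_iff_right₀ hk).mpr hlt
  have h2 : k1 * (t / t' - 1) = μ * (t - t') := by
    rw [← hμ]; field_simp
  nlinarith [h1]

set_option maxHeartbeats 1000000 in
/-- Existence and uniqueness of the Stackelberg equilibrium: under the stated
parameter restrictions there is exactly one pair `(p*, β*)` with
`p* ∈ [p_m, p_c]` and `β*^i ∈ [0,1]`, such that each `β*^i` maximizes
`U^i(p*, ·)` on `[0,1]` and `p*` maximizes the anticipated profit `L̃` on
`[p_m, p_c]`; moreover, at this equilibrium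
`β*^i = (1/(q·F^i·η^i))·(k1^i/p* − 1/b1^i)`. -/
theorem stmt_10 {ι : Type*} [Fintype ι] [Nonempty ι]
    (q : ℝ) (hq : 0 < q) (F η k1 b1 c : ι → ℝ)
    (hF : ∀ i, 0 < F i) (hη : ∀ i, 0 < η i)
    (hk1pos : ∀ i, 0 < k1 i) (hb1pos : ∀ i, 0 < b1 i)
    (p_m p_c p_s : ℝ) (R : ℝ)
    (hpm : 0 < p_m) (hmc : p_m ≤ p_c) (hce : p_c ≤ Real.exp 1 * p_m)
    (hes : Real.exp 1 * p_m ≤ p_s)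
    (hb1 : ∀ i, b1 i = (Real.exp 1 - 1) / (q * F i * η i))
    (hk1lo : ∀ i, p_c * (q * F i * η i / (Real.exp 1 - 1)) ≤ k1 i)
    (hk1hi : ∀ i, k1 i ≤ p_m * (Real.exp 1 * q * F i * η i / (Real.exp 1 - 1))) :
    (∃! s : ℝ × (ι → ℝ),
      s.1 ∈ Icc p_m p_c ∧ (∀ i, s.2 i ∈ Icc (0:ℝ) 1) ∧
      (∀ i, ∀ β ∈ Icc (0:ℝ) 1,
        cchpU q (F i) (η i) (k1 i) (b1 i) (c i) s.1 β
          ≤ cchpU q (F i) (η i) (k1 i) (b1 i) (c i) s.1 (s.2 i)) ∧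
      (∀ p ∈ Icc p_m p_c,
        apgProfit q F η k1 b1 p_s p_c R p ≤ apgProfit q F η k1 b1 p_s p_c R s.1)) ∧
    (∀ s : ℝ × (ι → ℝ),
      (s.1 ∈ Icc p_m p_c ∧ (∀ i, s.2 i ∈ Icc (0:ℝ) 1) ∧
        (∀ i, ∀ β ∈ Icc (0:ℝ) 1,
          cchpU q (F i) (η i) (k1 i) (b1 i) (c i) s.1 β
            ≤ cchpU q (F i) (η i) (k1 i) (b1 i) (c i) s.1 (s.2 i)) ∧
        (∀ p ∈ Icc p_m p_c,
          apgProfit q F η k1 b1 p_s p_c R p ≤ apgProfit q F η k1 b1 p_s p_c R s.1)) →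
      ∀ i, s.2 i = (1 / (q * F i * η i)) * (k1 i / s.1 - 1 / b1 i)) := by
  have hE : (0:ℝ) < Real.exp 1 - 1 := emone_pos
  have ha : ∀ i, 0 < q * F i * η i := fun i => mul_pos (mul_pos hq (hF i)) (hη i)
  -- best-response βstar
  set bs : ℝ → ι → ℝ :=
    fun p i => k1 i / (p * (q * F i * η i)) - 1 / (Real.exp 1 - 1) with hbs_def
  have hbs_eq : ∀ p : ℝ, p ≠ 0 → ∀ i,
      bs p i = (1 / (q * F i * η i)) * (k1 i / p - 1 / b1 i) := by
    intro p hp i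
    have hX : q * F i * η i ≠ 0 := (ha i).ne'
    rw [hb1 i, one_div_div]
    show k1 i / (p * (q * F i * η i)) - 1 / (Real.exp 1 - 1) = _
    have e1 : 1 / (q * F i * η i) * (k1 i / p) = k1 i / (p * (q * F i * η i)) := by
      rw [div_mul_div_comm, one_mul, mul_comm]
    have e2 : 1 / (q * F i * η i) * (q * F i * η i / (Real.exp 1 - 1))
        = 1 / (Real.exp 1 - 1) := by
      field_simp
      exact div_self (mul_ne_zero (hF i).ne' (hη i).ne')
    rw [mul_sub, e1, e2]
  -- normal form of the utility
  have hU_eq : ∀ i (p β : ℝ),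
      cchpU q (F i) (η i) (k1 i) (b1 i) (c i) p β
        = k1 i * Real.log (1 + (Real.exp 1 - 1) * β) + c i
            + p * (q * F i * η i) * (1 - β) := by
    intro i p β
    unfold cchpU
    rw [hb1 i]
    have h1 : q ≠ 0 := hq.ne'
    have h2 : F i ≠ 0 := (hF i).ne'
    have h3 : η i ≠ 0 := (hη i).ne'
    have harg : (Real.exp 1 - 1) / (q * F i * η i) * q * F i * η i * β
        = (Real.exp 1 - 1) * β := by
      field_simp
    rw [harg]
    ring
  -- βstar is feasible
  have hbs_mem : ∀ p ∈ Icc p_m p_c, ∀ i, bs p i ∈ Icc (0:ℝ) 1 := by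
    intro p hp i
    have hp0 : 0 < p := lt_of_lt_of_le hpm hp.1
    have hpa : 0 < p * (q * F i * η i) := mul_pos hp0 (ha i)
    have hlo : p_c * (q * F i * η i) ≤ k1 i * (Real.exp 1 - 1) := by
      have h := mul_le_mul_of_nonneg_right (hk1lo i) hE.le
      have h2 : p_c * (q * F i * η i / (Real.exp 1 - 1)) * (Real.exp 1 - 1)
          = p_c * (q * F i * η i) := by field_simp
      linarith
    have hhi : k1 i * (Real.exp 1 - 1) ≤ p_m * (Real.exp 1 * (q * F i * η i)) := by
      have h := mul_le_mul_of_nonneg_right (hk1hi i) hE.le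
      have h2 : p_m * (Real.exp 1 * q * F i * η i / (Real.exp 1 - 1)) * (Real.exp 1 - 1)
          = p_m * (Real.exp 1 * (q * F i * η i)) := by
        rw [mul_assoc, div_mul_cancel₀ _ hE.ne']
        ring
      linarith
    constructor
    · rw [hbs_def]
      simp only [sub_nonneg]
      rw [div_le_div_iff₀ hE hpa]
      have : p * (q * F i * η i) ≤ p_c * (q * F i * η i) :=
        mul_le_mul_of_nonneg_right hp.2 (ha i).le
      nlinarith
    · have h1 : k1 i / (p * (q * F i * η i)) ≤ Real.exp 1 / (Real.exp 1 - 1) := by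
        rw [div_le_div_iff₀ hpa hE]
        have : p_m * (Real.exp 1 * (q * F i * η i))
            ≤ p * (Real.exp 1 * (q * F i * η i)) := by
          apply mul_le_mul_of_nonneg_right hp.1
          have := ha i
          have := Real.exp_pos 1
          positivity
        nlinarith
      have h2 : Real.exp 1 / (Real.exp 1 - 1) - 1 / (Real.exp 1 - 1) = 1 := by
        rw [div_sub_div_same, div_eq_one_iff_eq hE.ne']
      rw [hbs_def]
      simp only
      linarith
  -- strict optimality of βstar
  have hUstrict : ∀ p ∈ Icc p_m p_c, ∀ i, ∀ β ∈ Icc (0:ℝ) 1, β ≠ bs p i →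
      cchpU q (F i) (η i) (k1 i) (b1 i) (c i) p β
        < cchpU q (F i) (η i) (k1 i) (b1 i) (c i) p (bs p i) := by
    intro p hp i β hβ hne
    have hp0 : 0 < p := lt_of_lt_of_le hpm hp.1
    have hai : 0 < q * F i * η i := ha i
    have hpa : 0 < p * (q * F i * η i) := mul_pos hp0 hai
    set μ : ℝ := p * (q * F i * η i) / (Real.exp 1 - 1) with hμ_def
    have hμpos : 0 < μ := div_pos hpa hE
    have hμE : μ * (Real.exp 1 - 1) = p * (q * F i * η i) := by
      rw [hμ_def]; field_simp
    have hts : 1 + (Real.exp 1 - 1) * bs p i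
        = (Real.exp 1 - 1) * k1 i / (p * (q * F i * η i)) := by
      rw [hbs_def]
      simp only
      field_simp
      ring
    have hts_pos : 0 < 1 + (Real.exp 1 - 1) * bs p i := by
      rw [hts]
      exact div_pos (mul_pos hE (hk1pos i)) hpa
    have hμts : μ * (1 + (Real.exp 1 - 1) * bs p i) = k1 i := by
      rw [hts, hμ_def]
      field_simp
      have hF0 := (hF i).ne'
      have hη0 := (hη i).ne'
      field_simp
    have ht_pos : 0 < 1 + (Real.exp 1 - 1) * β := by nlinarith [hβ.1]
    have htne : 1 + (Real.exp 1 - 1) * β ≠ 1 + (Real.exp 1 - 1) * bs p i := by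
      intro h
      apply hne
      have : (Real.exp 1 - 1) * β = (Real.exp 1 - 1) * bs p i := by linarith
      exact mul_left_cancel₀ hE.ne' this
    have key := key_log (k1 i) μ (1 + (Real.exp 1 - 1) * β)
      (1 + (Real.exp 1 - 1) * bs p i) (hk1pos i) ht_pos hts_pos hμts htne
    rw [hU_eq, hU_eq]
    have e1 : μ * (1 + (Real.exp 1 - 1) * β) = μ + p * (q * F i * η i) * β := by
      rw [hμ_def]; field_simp
    have e2 : μ * (1 + (Real.exp 1 - 1) * bs p i)
        = μ + p * (q * F i * η i) * bs p i := by
      rw [hμ_def]; field_simp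
    have e3 : p * (q * F i * η i) * (1 - β)
        = p * (q * F i * η i) - p * (q * F i * η i) * β := by ring
    have e4 : p * (q * F i * η i) * (1 - bs p i)
        = p * (q * F i * η i) - p * (q * F i * η i) * bs p i := by ring
    linarith
  -- uniqueness of the best response
  have hbeta_uniq : ∀ p ∈ Icc p_m p_c, ∀ i, ∀ b ∈ Icc (0:ℝ) 1,
      (∀ β ∈ Icc (0:ℝ) 1,
        cchpU q (F i) (η i) (k1 i) (b1 i) (c i) p β
          ≤ cchpU q (F i) (η i) (k1 i) (b1 i) (c i) p b) → b = bs p i := by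
    intro p hp i b hb hmax
    by_contra hne
    exact absurd (hmax (bs p i) (hbs_mem p hp i))
      (not_le.mpr (hUstrict p hp i b hb hne))
  have hbs_max : ∀ p ∈ Icc p_m p_c, ∀ i, ∀ β ∈ Icc (0:ℝ) 1,
      cchpU q (F i) (η i) (k1 i) (b1 i) (c i) p β
        ≤ cchpU q (F i) (η i) (k1 i) (b1 i) (c i) p (bs p i) := by
    intro p hp i β hβ
    by_cases h : β = bs p i
    · rw [h]
    · exact (hUstrict p hp i β hβ h).le
  -- the profit function in normal form
  set A : ℝ := ∑ i, q * F i * η i * Real.exp 1 / (Real.exp 1 - 1) with hA_def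
  set K : ℝ := ∑ i, k1 i with hK_def
  set D : ℝ := (p_s - p_c) * R with hD_def
  have hApos : 0 < A := by
    rw [hA_def]
    apply Finset.sum_pos _ Finset.univ_nonempty
    intro i _
    have := ha i
    have := Real.exp_pos 1
    positivity
  have hKpos : 0 < K := Finset.sum_pos (fun i _ => hk1pos i) Finset.univ_nonempty
  have hpc0 : 0 < p_c := lt_of_lt_of_le hpm hmc
  have hLrw : ∀ p : ℝ, p ≠ 0 → apgProfit q F η k1 b1 p_s p_c R p
      = p_c * A + K + D - (A * p + p_c * K / p) := by
    intro p hp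
    unfold apgProfit
    have hsum : ∑ i, (q * F i * η i - (k1 i / p - 1 / b1 i))
        = A - K / p := by
      have h1 : A - K / p
          = ∑ i, (q * F i * η i * Real.exp 1 / (Real.exp 1 - 1) - k1 i / p) := by
        rw [Finset.sum_sub_distrib, hA_def, hK_def, Finset.sum_div]
      rw [h1]
      apply Finset.sum_congr rfl
      intro i _
      rw [hb1 i]
      have h2 := (ha i).ne'
      field_simp
      ring
    rw [hsum]
    rw [hD_def]
    field_simp
    ring
  -- existence of a maximizer of the profit on [p_m, p_c]
  have hIcc_ne : (Icc p_m p_c).Nonempty := ⟨p_m, le_refl _, hmc⟩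
  have hcont0 : ContinuousOn (fun p : ℝ => p_c * A + K + D - (A * p + p_c * K / p))
      (Icc p_m p_c) := by
    apply ContinuousOn.sub continuousOn_const
    apply ContinuousOn.add
    · exact continuousOn_const.mul continuousOn_id
    · exact continuousOn_const.div continuousOn_id
        (fun x hx => (lt_of_lt_of_le hpm hx.1).ne')
  have hcont : ContinuousOn (fun p => apgProfit q F η k1 b1 p_s p_c R p)
      (Icc p_m p_c) :=
    hcont0.congr (fun p hp => hLrw p (lt_of_lt_of_le hpm hp.1).ne')
  obtain ⟨ps, hps_mem, hps_max⟩ := isCompact_Icc.exists_isMaxOn hIcc_ne hcont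
  -- uniqueness of the profit maximizer
  have huniq_p : ∀ p ∈ Icc p_m p_c, ∀ p' ∈ Icc p_m p_c,
      (∀ x ∈ Icc p_m p_c,
        apgProfit q F η k1 b1 p_s p_c R x ≤ apgProfit q F η k1 b1 p_s p_c R p) →
      (∀ x ∈ Icc p_m p_c,
        apgProfit q F η k1 b1 p_s p_c R x ≤ apgProfit q F η k1 b1 p_s p_c R p') →
      p = p' := by
    intro p hp p' hp' hmax hmax'
    by_contra hne
    have hp0 : 0 < p := lt_of_lt_of_le hpm hp.1
    have hp'0 : 0 < p' := lt_of_lt_of_le hpm hp'.1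
    have hLeq : apgProfit q F η k1 b1 p_s p_c R p
        = apgProfit q F η k1 b1 p_s p_c R p' :=
      le_antisymm (hmax' p hp) (hmax p' hp')
    have hf : A * p + p_c * K / p = A * p' + p_c * K / p' := by
      have h1 := hLrw p hp0.ne'
      have h2 := hLrw p' hp'0.ne'
      rw [h1, h2] at hLeq
      linarith
    -- derive p_c * K = A * p * p'
    have hd : p - p' ≠ 0 := sub_ne_zero.mpr hne
    have hf' : (A * (p * p')) * (p - p') = (p_c * K) * (p - p') := by
      have h := hf
      field_simp at h
      linear_combination h
    have hc1A : p_c * K = A * (p * p') := (mul_right_cancel₀ hd hf').symm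
    -- geometric mean
    set g : ℝ := Real.sqrt (p * p') with hg_def
    have hg2 : g * g = p * p' := Real.mul_self_sqrt (by positivity)
    have hg_pos : 0 < g := Real.sqrt_pos.mpr (by positivity)
    have hg_mem : g ∈ Icc p_m p_c := by
      constructor
      · have h1 : p_m * p_m ≤ p * p' := mul_le_mul hp.1 hp'.1 hpm.le hp0.le
        have h2 := Real.sqrt_le_sqrt h1
        rwa [Real.sqrt_mul_self hpm.le] at h2
      · have h1 : p * p' ≤ p_c * p_c := mul_le_mul hp.2 hp'.2 hp'0.le hpc0.le
        have h2 := Real.sqrt_le_sqrt h1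
        rwa [Real.sqrt_mul_self hpc0.le] at h2
    -- strict AM–GM
    have hsp : Real.sqrt p * Real.sqrt p = p := Real.mul_self_sqrt hp0.le
    have hsp' : Real.sqrt p' * Real.sqrt p' = p' := Real.mul_self_sqrt hp'0.le
    have hgsp : g = Real.sqrt p * Real.sqrt p' := Real.sqrt_mul hp0.le p'
    have hspne : Real.sqrt p ≠ Real.sqrt p' := by
      intro h
      apply hne
      rw [← hsp, ← hsp', h]
    have hsq : 0 < (Real.sqrt p - Real.sqrt p') ^ 2 := by
      have h := sub_ne_zero.mpr hspne
      exact lt_of_le_of_ne (sq_nonneg _) (Ne.symm (pow_ne_zero 2 h))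
    have h2g : 2 * g < p + p' := by nlinarith [hsq, hsp, hsp', hgsp]
    -- compare the values
    have hdivg : p_c * K / g = A * g := by
      rw [hc1A, ← hg2]
      field_simp
    have hdivp : p_c * K / p = A * p' := by
      rw [hc1A]
      field_simp
    have hval : A * g + p_c * K / g < A * p + p_c * K / p := by
      rw [hdivg, hdivp]
      nlinarith [mul_lt_mul_of_pos_left h2g hApos]
    have hcontr : apgProfit q F η k1 b1 p_s p_c R p
        < apgProfit q F η k1 b1 p_s p_c R g := by
      rw [hLrw p hp0.ne', hLrw g hg_pos.ne']
      linarith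
    exact absurd (hmax g hg_mem) (not_le.mpr hcontr)
  -- assemble
  constructor
  · refine ⟨(ps, fun i => bs ps i), ⟨hps_mem, fun i => hbs_mem ps hps_mem i,
      fun i β hβ => hbs_max ps hps_mem i β hβ, fun p hp => hps_max hp⟩, ?_⟩
    rintro ⟨p', β'⟩ ⟨h1, h2, h3, h4⟩
    have hpeq : p' = ps := huniq_p p' h1 ps hps_mem h4 (fun x hx => hps_max hx)
    have hβeq : ∀ i, β' i = bs ps i := by
      intro i
      rw [← hpeq]
      exact hbeta_uniq p' h1 i (β' i) (h2 i) (h3 i)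
    rw [Prod.mk.injEq]
    exact ⟨hpeq, funext hβeq⟩
  · rintro ⟨p', β'⟩ ⟨h1, h2, h3, h4⟩ i
    have hp0 : p' ≠ 0 := (lt_of_lt_of_le hpm h1.1).ne'
    have := hbeta_uniq p' h1 i (β' i) (h2 i) (h3 i)
    simp only at this ⊢
    rw [this, hbs_eq p' hp0 i]
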